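/- For α > 0 and x > 0 define g(α,x) = ((x+α+1)/α) · Σ_{j=1}^{∞} (α/(α+1))^j · 1/(x+j). Then g(α,x) > 1 for every α > 0 and x > 0. -/

import Mathlib

/-- The function `g(α,x) = ((x+α+1)/α) · Σ_{j≥1} (α/(α+1))^j / (x+j)` from the appendix
satisfies `g(α,x) > 1` for all `α > 0`, `x > 0`. -/
theorem g_gt_one (α x : ℝ) (hα : 0 < α) (hx : 0 < x) :
    1 < ((x + α + 1) / α) *
      ∑' j : ℕ, (α / (α + 1)) ^ (j + 1) * (1 / (x + ((j : ℝ) + 1))) := by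
  set r : ℝ := α / (α + 1) with hrdef
  have hα1 : (0:ℝ) < α + 1 := by linarith
  have hr0 : 0 < r := div_pos hα hα1
  have hr1 : r < 1 := (div_lt_one hα1).2 (by linarith)
  set D : ℝ := x + α + 1 with hDdef
  have hD0 : 0 < D := by dsimp [D]; linarith
  -- the lower bound function (tangent line to 1/t at t = D)
  set h : ℕ → ℝ := fun j => r ^ (j + 1) * (1 / D - ((x + ((j:ℝ) + 1)) - D) / D ^ 2)
    with hhdef
  set f : ℕ → ℝ := fun j => r ^ (j + 1) * (1 / (x + ((j:ℝ) + 1))) with hfdef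
  have htj : ∀ j : ℕ, (0:ℝ) < x + ((j:ℝ) + 1) := by
    intro j
    have : (0:ℝ) ≤ (j : ℝ) := Nat.cast_nonneg j
    linarith
  -- summability of f by comparison with geometric
  have hsgeom : Summable (fun j : ℕ => r ^ j) := summable_geometric_of_lt_one hr0.le hr1
  have hsf : Summable f := by
    apply Summable.of_nonneg_of_le (f := fun j : ℕ => r ^ j * (1 / x))
    · intro j
      have := htj j
      positivity
    · intro j
      have hj := htj j
      have h1 : (1:ℝ) / (x + ((j:ℝ) + 1)) ≤ 1 / x := by
        apply one_div_le_one_div_of_le hx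
        have : (0:ℝ) ≤ (j : ℝ) := Nat.cast_nonneg j
        linarith
      have h2 : r ^ (j + 1) ≤ r ^ j := by
        apply pow_le_pow_of_le_one hr0.le hr1.le
        omega
      have hpn : (0:ℝ) ≤ r ^ (j+1) := by positivity
      calc f j = r ^ (j+1) * (1 / (x + ((j:ℝ) + 1))) := rfl
        _ ≤ r ^ (j+1) * (1 / x) := by
            apply mul_le_mul_of_nonneg_left h1 hpn
        _ ≤ r ^ j * (1 / x) := by
            apply mul_le_mul_of_nonneg_right h2 (by positivity)
    · exact hsgeom.mul_right _
  -- summability of the coefficient sequences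
  have hsn : Summable (fun j : ℕ => (j : ℝ) * r ^ j) := by
    have := hasSum_coe_mul_geometric_of_norm_lt_one (𝕜 := ℝ)
      (r := r) (by rwa [Real.norm_eq_abs, abs_of_pos hr0])
    exact this.summable
  -- rewrite h as a linear combination
  have hhform : ∀ j : ℕ, h j = r ^ j * (r / D + α * r / D ^ 2) - ((j:ℝ) * r ^ j) * (r / D ^ 2) := by
    intro j
    simp only [hhdef, hDdef, pow_succ]
    ring
  have hsc1 : Summable (fun j : ℕ => r ^ j * (r / D + α * r / D ^ 2)) := hsgeom.mul_right _
  have hsc2 : Summable (fun j : ℕ => ((j:ℝ) * r ^ j) * (r / D ^ 2)) := hsn.mul_right _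
  have hsh : Summable h := by
    rw [show h = fun j : ℕ => r ^ j * (r / D + α * r / D ^ 2) - ((j:ℝ) * r ^ j) * (r / D ^ 2)
      from funext hhform]
    exact hsc1.sub hsc2
  -- key facts about r
  have h1r : 1 - r = 1 / (α + 1) := by
    rw [hrdef]
    field_simp
    ring
  -- tsum of h equals α / D
  have hH : ∑' j, h j = α / D := by
    rw [show h = fun j : ℕ => r ^ j * (r / D + α * r / D ^ 2) - ((j:ℝ) * r ^ j) * (r / D ^ 2)
      from funext hhform]
    rw [Summable.tsum_sub hsc1 hsc2, tsum_mul_right, tsum_mul_right,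
      tsum_geometric_of_lt_one hr0.le hr1,
      tsum_coe_mul_geometric_of_norm_lt_one (by rwa [Real.norm_eq_abs, abs_of_pos hr0])]
    rw [h1r]
    have hD' : D ≠ 0 := ne_of_gt hD0
    have hα1' : α + 1 ≠ 0 := ne_of_gt hα1
    field_simp [hrdef]
    rw [hrdef]
    field_simp
    ring
  -- pointwise: h j ≤ f j, strict at j = 0
  have hkeydiff : ∀ j : ℕ, f j - h j
      = r ^ (j + 1) * (((x + ((j:ℝ) + 1)) - D) ^ 2 / ((x + ((j:ℝ) + 1)) * D ^ 2)) := by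
    intro j
    have hj := htj j
    simp only [hfdef, hhdef]
    rw [← mul_sub]
    congr 1
    field_simp
    ring
  have hle : ∀ j : ℕ, h j ≤ f j := by
    intro j
    have hj := htj j
    have : 0 ≤ f j - h j := by
      rw [hkeydiff j]
      positivity
    linarith
  have hlt0 : h 0 < f 0 := by
    have h0 : f 0 - h 0 = r ^ 1 * (((x + ((0:ℝ) + 1)) - D) ^ 2 / ((x + ((0:ℝ) + 1)) * D ^ 2)) := by
      simpa using hkeydiff 0
    have hx1 : (0:ℝ) < x + ((0:ℝ) + 1) := by linarith
    have hsq : ((x + ((0:ℝ) + 1)) - D) ^ 2 = α ^ 2 := by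
      simp only [hDdef]; ring
    have : 0 < f 0 - h 0 := by
      rw [h0, hsq]
      positivity
    linarith
  have key : α / D < ∑' j, f j := by
    rw [← hH]
    exact Summable.tsum_lt_tsum hle hlt0 hsh hsf
  -- finish
  have hfrac : 0 < D / α := div_pos hD0 hα
  calc (1:ℝ) = (D / α) * (α / D) := by
        field_simp
    _ < (D / α) * ∑' j, f j := by
        exact mul_lt_mul_of_pos_left key hfrac
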